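/- Let G_N = D_N^{-r}(I_N - H_N), where H_N is the block operator with blocks (H_N)_{n,k} = h_{n-k} P_{W_n}···P_{W_{k+1}} for 1 ≤ n-k ≤ L and 0 otherwise, with h defined from parameters (r, σ) as above and L = n_r. Then G_N is lower triangular and banded: its (i,j) block equals (C(r+i-j-1, r-1) - Σ_{l=1}^{i-j} C(r+i-j-l-1, r-1) h_l)·P_{W_i}···P_{W_{j+1}} for 0 < i-j < K := n_r - r + 1, the identity for i = j, and zero otherwise. -/

import Mathlib

noncomputable section

/-- The orthogonal projection onto `W`, as an endomorphism of the ambient space. -/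
def projEnd {d : ℕ} (W : Submodule ℝ (EuclideanSpace ℝ (Fin d))) :
    Module.End ℝ (EuclideanSpace ℝ (Fin d)) :=
  W.subtype ∘ₗ (W.orthogonalProjectionOnto).toLinearMap

/-- The composition `P_{W_i} P_{W_{i-1}} ⋯ P_{W_{j+1}}` (equal to `1` when `i ≤ j`). -/
def projChain {d : ℕ} (W : ℕ → Submodule ℝ (EuclideanSpace ℝ (Fin d))) (i j : ℕ) :
    Module.End ℝ (EuclideanSpace ℝ (Fin d)) :=
  (((List.range (i - j)).map fun t => projEnd (W (i - t)))).prod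

set_option maxHeartbeats 1600000

lemma projChain_of_le {d : ℕ} (W : ℕ → Submodule ℝ (EuclideanSpace ℝ (Fin d))) {i j : ℕ}
    (h : i ≤ j) : projChain W i j = 1 := by
  unfold projChain
  rw [Nat.sub_eq_zero_of_le h]
  simp

lemma projChain_succ {d : ℕ} (W : ℕ → Submodule ℝ (EuclideanSpace ℝ (Fin d))) {i j : ℕ}
    (hij : j < i) : projChain W i j = projChain W i (j + 1) * projEnd (W (j + 1)) := by
  unfold projChain
  have h1 : i - j = (i - (j + 1)) + 1 := by omega
  rw [h1, List.range_succ, List.map_append, List.prod_append]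
  have h2 : i - (i - (j + 1)) = j + 1 := by omega
  simp [h2]

lemma projChain_mul {d : ℕ} (W : ℕ → Submodule ℝ (EuclideanSpace ℝ (Fin d))) {i k j : ℕ}
    (h1 : j ≤ k) (h2 : k ≤ i) : projChain W i k * projChain W k j = projChain W i j := by
  unfold projChain
  have h3 : i - j = (i - k) + (k - j) := by omega
  rw [h3, List.range_add, List.map_append, List.prod_append, List.map_map]
  congr 2
  apply List.map_congr_left
  intro t ht
  rw [List.mem_range] at ht
  simp only [Function.comp_apply]
  have h4 : i - (i - k + t) = k - t := by omega
  rw [h4]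

lemma prod_range_asc (a m : ℕ) :
    ∏ k ∈ Finset.range m, (a + 1 + k) = (a + 1).ascFactorial m := by
  induction m with
  | zero => simp
  | succ m ih =>
    rw [Finset.prod_range_succ, ih, Nat.ascFactorial_succ, Nat.mul_comm]

lemma key_identity (r σ : ℕ) (hr : 1 ≤ r) (hσ : 1 ≤ σ)
    (nn : ℕ → ℕ) (hnn : ∀ j, nn j = σ * (j - 1) ^ 2 + 1)
    (dd : ℕ → ℝ)
    (hdd : ∀ j, dd j = ∏ i ∈ (Finset.Icc 1 r).erase j, (nn i : ℝ) / ((nn i : ℝ) - (nn j : ℝ)))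
    (h : ℕ → ℝ)
    (hh : ∀ l, h l = ∑ j ∈ Finset.Icc 1 r, if l = nn j then dd j else 0)
    (n : ℕ) (hn : nn r - r + 1 ≤ n) :
    ((r + n - 1).choose (r - 1) : ℝ) =
      ∑ l ∈ Finset.Icc 1 n, ((r + n - l - 1).choose (r - 1) : ℝ) * h l := by
  have hnn1 : ∀ j, 1 ≤ nn j := by intro j; rw [hnn]; omega
  have hmono : ∀ j, j ≤ r → nn j ≤ nn r := by
    intro j hj
    rw [hnn, hnn]
    have : (j - 1) ^ 2 ≤ (r - 1) ^ 2 := Nat.pow_le_pow_left (by omega) 2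
    exact by nlinarith [Nat.mul_le_mul_left σ this]
  have hub : ∀ j ∈ Finset.Icc 1 r, nn j ≤ n + r - 1 := by
    intro j hj
    rw [Finset.mem_Icc] at hj
    have := hmono j hj.2
    have := hnn1 r
    omega
  -- choose vanishing for out-of-range nodes
  have hczero : ∀ j ∈ Finset.Icc 1 r, n < nn j → (r + n - nn j - 1).choose (r - 1) = 0 := by
    intro j hj hjn
    apply Nat.choose_eq_zero_of_lt
    have := hub j hj
    omega
  have hinj : Set.InjOn (fun j => ((nn j : ℕ) : ℝ)) (Finset.Icc 1 r : Finset ℕ) := by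
    intro a ha b hb hab
    simp only [Finset.coe_Icc, Set.mem_Icc] at ha hb
    have hab' : nn a = nn b := Nat.cast_injective hab
    rw [hnn, hnn] at hab'
    have h2 : (a - 1) ^ 2 = (b - 1) ^ 2 := by
      have := Nat.eq_of_mul_eq_mul_left (show 0 < σ by omega) (by omega : σ * (a-1)^2 = σ * (b-1)^2)
      exact this
    have := Nat.pow_left_injective (by norm_num : (2:ℕ) ≠ 0) h2
    omega
  set s : Finset ℕ := Finset.Icc 1 r with hs
  set v : ℕ → ℝ := fun j => ((nn j : ℕ) : ℝ) with hv
  set q : Polynomial ℝ :=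
    ∏ k ∈ Finset.range (r - 1), (Polynomial.C ((n : ℝ) + 1 + k) - Polynomial.X) with hq
  have hcard : s.card = r := by simp [hs]
  have hdeg1 : q.degree ≤ ((r - 1 : ℕ) : WithBot ℕ) := by
    rw [hq]
    refine le_trans (Polynomial.degree_prod_le _ _) ?_
    have hb : ∀ k ∈ Finset.range (r - 1),
        (Polynomial.C ((n : ℝ) + 1 + k) - Polynomial.X).degree ≤ (1 : WithBot ℕ) := by
      intro k _
      refine le_trans (Polynomial.degree_sub_le _ _) ?_
      rw [Polynomial.degree_X]
      exact max_le (Polynomial.degree_C_le.trans (by norm_num)) le_rfl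
    refine le_trans (Finset.sum_le_sum hb) ?_
    rw [Finset.sum_const, Finset.card_range]
    simp [nsmul_eq_mul]
  have hdeg : q.degree < (s.card : ℕ) := by
    refine lt_of_le_of_lt hdeg1 ?_
    rw [hcard, Nat.cast_withBot, Nat.cast_withBot]
    exact WithBot.coe_lt_coe.mpr (by omega)
  have hinterp := Lagrange.eq_interpolate (s := s) (v := v) hinj hdeg
  -- evaluate at 0
  have heval : q.eval 0 = ∑ j ∈ s, q.eval (v j) * (Lagrange.basis s v j).eval 0 := by
    conv_lhs => rw [hinterp]
    rw [Lagrange.interpolate_apply, Polynomial.eval_finset_sum]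
    exact Finset.sum_congr rfl fun j _ => by rw [Polynomial.eval_mul, Polynomial.eval_C]
  -- eval of q at 0
  have hq0 : q.eval 0 = ((r - 1).factorial : ℝ) * ((r + n - 1).choose (r - 1) : ℝ) := by
    rw [hq, Polynomial.eval_prod]
    have : ∀ k ∈ Finset.range (r - 1),
        Polynomial.eval 0 (Polynomial.C ((n : ℝ) + 1 + k) - Polynomial.X)
          = ((n + 1 + k : ℕ) : ℝ) := by
      intro k _
      simp only [Polynomial.eval_sub, Polynomial.eval_C, Polynomial.eval_X]
      push_cast; ring
    rw [Finset.prod_congr rfl this, ← Nat.cast_prod, prod_range_asc,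
      Nat.ascFactorial_eq_factorial_mul_choose]
    have : n + (r - 1) = r + n - 1 := by omega
    rw [this]; push_cast; ring
  -- eval of q at nodes
  have hqv : ∀ j ∈ s, q.eval (v j)
      = ((r - 1).factorial : ℝ) * ((r + n - nn j - 1).choose (r - 1) : ℝ) := by
    intro j hj
    rw [hq, Polynomial.eval_prod]
    by_cases hjn : nn j ≤ n
    · have : ∀ k ∈ Finset.range (r - 1),
          Polynomial.eval (v j) (Polynomial.C ((n : ℝ) + 1 + k) - Polynomial.X)
            = (((n - nn j) + 1 + k : ℕ) : ℝ) := by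
        intro k _
        simp only [Polynomial.eval_sub, Polynomial.eval_C, Polynomial.eval_X, hv]
        rw [Nat.cast_add, Nat.cast_add, Nat.cast_sub hjn]
        push_cast; ring
      rw [Finset.prod_congr rfl this, ← Nat.cast_prod, prod_range_asc,
        Nat.ascFactorial_eq_factorial_mul_choose]
      have : (n - nn j) + (r - 1) = r + n - nn j - 1 := by
        have := hnn1 j; omega
      rw [this]; push_cast; ring
    · push_neg at hjn
      rw [hczero j hj hjn]
      have hub' := hub j hj
      have hr2 : 2 ≤ r := by omega
      have hk : nn j - n - 1 ∈ Finset.range (r - 1) := by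
        rw [Finset.mem_range]; omega
      rw [Finset.prod_eq_zero hk]
      · simp
      · simp only [Polynomial.eval_sub, Polynomial.eval_C, Polynomial.eval_X, hv]
        have : (n : ℝ) + 1 + (nn j - n - 1 : ℕ) = (nn j : ℝ) := by
          rw [Nat.cast_sub (by omega), Nat.cast_sub (by omega)]
          push_cast; ring
        rw [this, sub_self]
  -- eval of basis at 0
  have hbasis : ∀ j ∈ s, (Lagrange.basis s v j).eval 0 = dd j := by
    intro j hj
    rw [Lagrange.basis, Polynomial.eval_prod, hdd]
    refine Finset.prod_congr rfl fun i hi => ?_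
    rw [Lagrange.basisDivisor]
    simp only [Polynomial.eval_mul, Polynomial.eval_C, Polynomial.eval_sub, Polynomial.eval_X, hv]
    rw [div_eq_mul_inv, ← neg_sub ((nn j : ℝ)) ((nn i : ℝ)), inv_neg]
    ring
  -- combine
  have hfac : ((r - 1).factorial : ℝ) ≠ 0 := by positivity
  have hmain : ((r + n - 1).choose (r - 1) : ℝ) =
      ∑ j ∈ s, ((r + n - nn j - 1).choose (r - 1) : ℝ) * dd j := by
    have := heval
    rw [hq0] at this
    rw [Finset.sum_congr rfl (fun j hj => by rw [hqv j hj, hbasis j hj])] at this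
    have h2 : ((r-1).factorial : ℝ) * ((r + n - 1).choose (r - 1) : ℝ)
        = ((r-1).factorial : ℝ) * ∑ j ∈ s, ((r + n - nn j - 1).choose (r - 1) : ℝ) * dd j := by
      rw [this, Finset.mul_sum]
      exact Finset.sum_congr rfl fun j _ => by ring
    exact mul_left_cancel₀ hfac h2
  rw [hmain]
  -- now massage RHS of goal
  have : ∀ l, ((r + n - l - 1).choose (r - 1) : ℝ) * h l
      = ∑ j ∈ s, if l = nn j then ((r + n - l - 1).choose (r - 1) : ℝ) * dd j else 0 := by
    intro l
    rw [hh, Finset.mul_sum]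
    exact Finset.sum_congr rfl fun j _ => by rw [mul_ite, mul_zero]
  rw [Finset.sum_congr rfl fun l _ => this l, Finset.sum_comm]
  refine Finset.sum_congr rfl fun j hj => ?_
  have hswap : ∀ l ∈ Finset.Icc 1 n,
      (if l = nn j then ((r + n - l - 1).choose (r - 1) : ℝ) * dd j else 0)
      = (if l = nn j then ((r + n - nn j - 1).choose (r - 1) : ℝ) * dd j else 0) := by
    intro l _
    by_cases hl : l = nn j
    · rw [if_pos hl, if_pos hl, hl]
    · rw [if_neg hl, if_neg hl]
  rw [Finset.sum_congr rfl hswap, Finset.sum_ite_eq' (Finset.Icc 1 n) (nn j)]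
  by_cases hmem : nn j ∈ Finset.Icc 1 n
  · rw [if_pos hmem]
  · rw [if_neg hmem]
    have : n < nn j := by
      rw [Finset.mem_Icc] at hmem
      have := hnn1 j; omega
    rw [hczero j hj this]
    simp

/-- `G_N = D_N^{-r}(I - H_N)` is lower triangular and banded, with blocks
`(C(r+i-j-1,r-1) - Σ_{l=1}^{i-j} C(r+i-j-l-1,r-1)h_l)·P_{W_i}⋯P_{W_{j+1}}` for
`0 < i-j < K = n_r - r + 1`, the identity on the diagonal, and `0` otherwise. -/
theorem stmt_14 (d N r σ : ℕ) (hr : 1 ≤ r) (hσ : 1 ≤ σ) (hN : 1 ≤ N)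
    (nn : ℕ → ℕ) (hnn : ∀ j, nn j = σ * (j - 1) ^ 2 + 1)
    (dd : ℕ → ℝ)
    (hdd : ∀ j, dd j = ∏ i ∈ (Finset.Icc 1 r).erase j, (nn i : ℝ) / ((nn i : ℝ) - (nn j : ℝ)))
    (h : ℕ → ℝ)
    (hh : ∀ l, h l = ∑ j ∈ Finset.Icc 1 r, if l = nn j then dd j else 0)
    (W : ℕ → Submodule ℝ (EuclideanSpace ℝ (Fin d)))
    (D S Hmat : Matrix (Fin N) (Fin N) (Module.End ℝ (EuclideanSpace ℝ (Fin d))))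
    (hD : ∀ i j : Fin N, D i j =
      if i = j then 1 else if (i : ℕ) = (j : ℕ) + 1 then -projEnd (W (i : ℕ)) else 0)
    (hS1 : D ^ r * S = 1) (hS2 : S * D ^ r = 1)
    (hHmat : ∀ n k : Fin N, Hmat n k =
      if (k : ℕ) < (n : ℕ) ∧ (n : ℕ) - (k : ℕ) ≤ nn r then
        h ((n : ℕ) - (k : ℕ)) • projChain W (n : ℕ) (k : ℕ) else 0) :
    ∀ i j : Fin N, (S * (1 - Hmat)) i j =
      if i = j then 1
      else if (j : ℕ) < (i : ℕ) ∧ (i : ℕ) - (j : ℕ) < nn r - r + 1 then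
        ((Nat.choose (r + (i : ℕ) - (j : ℕ) - 1) (r - 1) : ℝ) -
          ∑ l ∈ Finset.Icc 1 ((i : ℕ) - (j : ℕ)),
            (Nat.choose (r + (i : ℕ) - (j : ℕ) - l - 1) (r - 1) : ℝ) * h l) •
          projChain W (i : ℕ) (j : ℕ)
      else 0 := by
  classical
  have hnn1 : ∀ j, 1 ≤ nn j := by intro j; rw [hnn]; omega
  have hmono : ∀ j, j ≤ r → nn j ≤ nn r := by
    intro j hj
    rw [hnn, hnn]
    have : (j - 1) ^ 2 ≤ (r - 1) ^ 2 := Nat.pow_le_pow_left (by omega) 2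
    exact by nlinarith [Nat.mul_le_mul_left σ this]
  have hhzero : ∀ l, nn r < l → h l = 0 := by
    intro l hl
    rw [hh]
    apply Finset.sum_eq_zero
    intro j' hj'
    rw [Finset.mem_Icc] at hj'
    rw [if_neg]
    intro hc
    have := hmono j' hj'.2
    omega
  set T : ℕ → Matrix (Fin N) (Fin N) (Module.End ℝ (EuclideanSpace ℝ (Fin d))) :=
    fun m => Matrix.of fun i j : Fin N =>
      if (j : ℕ) ≤ (i : ℕ) then
        ((Nat.choose (m + ((i : ℕ) - (j : ℕ))) m : ℝ)) • projChain W (i : ℕ) (j : ℕ)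
      else 0 with hT
  have hTapp : ∀ m (i j : Fin N), T m i j =
      if (j : ℕ) ≤ (i : ℕ) then
        ((Nat.choose (m + ((i : ℕ) - (j : ℕ))) m : ℝ)) • projChain W (i : ℕ) (j : ℕ)
      else 0 := fun m i j => rfl
  have hmulD : ∀ (A : Matrix (Fin N) (Fin N) (Module.End ℝ (EuclideanSpace ℝ (Fin d))))
      (i j : Fin N), (A * D) i j = A i j +
        (if hj : (j : ℕ) + 1 < N then A i ⟨(j : ℕ) + 1, hj⟩ * (-projEnd (W ((j : ℕ) + 1)))
         else 0) := by
    intro A i j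
    rw [Matrix.mul_apply]
    have hsplit : ∀ k : Fin N, A i k * D k j
        = (if k = j then A i k else 0)
          + (if (k : ℕ) = (j : ℕ) + 1 then A i k * (-projEnd (W (k : ℕ))) else 0) := by
      intro k
      rw [hD]
      by_cases h1 : k = j
      · have h2 : ¬ ((k : ℕ) = (j : ℕ) + 1) := by subst h1; omega
        rw [if_pos h1, if_pos h1, if_neg h2, mul_one, add_zero]
      · rw [if_neg h1, if_neg h1]
        by_cases h2 : (k : ℕ) = (j : ℕ) + 1
        · rw [if_pos h2, if_pos h2, zero_add]
        · rw [if_neg h2, if_neg h2, mul_zero, add_zero]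
    rw [Finset.sum_congr rfl fun k _ => hsplit k, Finset.sum_add_distrib,
      Finset.sum_ite_eq' Finset.univ j (fun k => A i k), if_pos (Finset.mem_univ j)]
    congr 1
    by_cases hj : (j : ℕ) + 1 < N
    · rw [dif_pos hj]
      have hrw : (∑ k : Fin N, if (k : ℕ) = (j : ℕ) + 1 then A i k * (-projEnd (W (k : ℕ))) else 0)
          = ∑ k : Fin N, if k = (⟨(j : ℕ) + 1, hj⟩ : Fin N)
              then A i k * (-projEnd (W (k : ℕ))) else 0 := by
        refine Finset.sum_congr rfl fun k _ => ?_
        by_cases hk : (k : ℕ) = (j : ℕ) + 1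
        · rw [if_pos hk, if_pos (Fin.ext hk)]
        · rw [if_neg hk, if_neg (fun hc => hk (by rw [hc]))]
      rw [hrw, Finset.sum_ite_eq' Finset.univ (⟨(j : ℕ) + 1, hj⟩ : Fin N)
        (fun k => A i k * (-projEnd (W (k : ℕ)))), if_pos (Finset.mem_univ _)]
    · rw [dif_neg hj]
      apply Finset.sum_eq_zero
      intro k _
      rw [if_neg]
      have := k.isLt
      omega
  have hdite0 : ∀ m (i j : Fin N), (i : ℕ) ≤ (j : ℕ) →
      (if hj : (j : ℕ) + 1 < N then T m i ⟨(j : ℕ) + 1, hj⟩ * (-projEnd (W ((j : ℕ) + 1)))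
       else 0) = 0 := by
    intro m i j hij
    by_cases hj : (j : ℕ) + 1 < N
    · rw [dif_pos hj, hTapp, if_neg (by simp only [Fin.val_mk]; omega), zero_mul]
    · rw [dif_neg hj]
  have hditeS : ∀ m (i j : Fin N), (j : ℕ) < (i : ℕ) →
      (if hj : (j : ℕ) + 1 < N then T m i ⟨(j : ℕ) + 1, hj⟩ * (-projEnd (W ((j : ℕ) + 1)))
       else 0)
      = -(((Nat.choose (m + ((i : ℕ) - ((j : ℕ) + 1))) m : ℝ)) • projChain W (i : ℕ) (j : ℕ)) := by
    intro m i j hij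
    have hj : (j : ℕ) + 1 < N := lt_of_le_of_lt hij i.isLt
    rw [dif_pos hj, hTapp]
    rw [if_pos (show ((⟨(j : ℕ) + 1, hj⟩ : Fin N) : ℕ) ≤ (i : ℕ) from hij)]
    rw [smul_mul_assoc, mul_neg, smul_neg]
    rw [show ((⟨(j : ℕ) + 1, hj⟩ : Fin N) : ℕ) = (j : ℕ) + 1 from rfl]
    rw [← projChain_succ W hij]
  have hT0 : T 0 * D = 1 := by
    ext i j : 1
    rw [hmulD, Matrix.one_apply]
    rcases lt_trichotomy ((j : ℕ)) ((i : ℕ)) with hlt | heq | hgt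
    · have hne : i ≠ j := fun hc => by rw [hc] at hlt; exact lt_irrefl _ hlt
      rw [hditeS 0 i j hlt, hTapp, if_pos (le_of_lt hlt), if_neg hne]
      simp
    · have hij : i = j := Fin.ext heq.symm
      subst hij
      rw [if_pos rfl, hdite0 0 i i le_rfl, hTapp, if_pos le_rfl, Nat.sub_self,
        projChain_of_le W le_rfl]
      simp
    · have hne : i ≠ j := fun hc => by rw [hc] at hgt; exact lt_irrefl _ hgt
      rw [hdite0 0 i j (le_of_lt hgt), hTapp, if_neg (by omega), if_neg hne, add_zero]
  have hTsucc : ∀ m, T (m + 1) * D = T m := by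
    intro m
    ext i j : 1
    rw [hmulD]
    rcases lt_trichotomy ((j : ℕ)) ((i : ℕ)) with hlt | heq | hgt
    · rw [hditeS (m + 1) i j hlt, hTapp, hTapp, if_pos (le_of_lt hlt), if_pos (le_of_lt hlt)]
      rw [← neg_smul, ← add_smul]
      congr 1
      have h1 : m + 1 + ((i : ℕ) - (j : ℕ)) = (m + ((i : ℕ) - (j : ℕ))) + 1 := by omega
      have h2 : m + 1 + ((i : ℕ) - ((j : ℕ) + 1)) = m + ((i : ℕ) - (j : ℕ)) := by omega
      rw [h1, h2, Nat.choose_succ_succ' (m + ((i : ℕ) - (j : ℕ))) m]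
      push_cast
      ring
    · have hij : i = j := Fin.ext heq.symm
      subst hij
      rw [hdite0 (m + 1) i i le_rfl, hTapp, hTapp, if_pos le_rfl, if_pos le_rfl, Nat.sub_self]
      simp
    · rw [hdite0 (m + 1) i j (le_of_lt hgt), hTapp, hTapp, if_neg (by omega), if_neg (by omega),
        add_zero]
  have hTpow : ∀ m, T m * D ^ (m + 1) = 1 := by
    intro m
    induction m with
    | zero => rw [pow_one]; exact hT0
    | succ m ih => rw [pow_succ', ← Matrix.mul_assoc, hTsucc m, ih]
  have hSr : S = T (r - 1) := by
    have h1 : T (r - 1) * D ^ r = 1 := by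
      have := hTpow (r - 1)
      rwa [Nat.sub_add_cancel hr] at this
    calc S = 1 * S := (one_mul S).symm
    _ = (T (r - 1) * D ^ r) * S := by rw [h1]
    _ = T (r - 1) * (D ^ r * S) := by rw [Matrix.mul_assoc]
    _ = T (r - 1) := by rw [hS1, Matrix.mul_one]
  intro i j
  rw [Matrix.mul_sub, Matrix.mul_one, Matrix.sub_apply, hSr]
  rcases lt_trichotomy ((j : ℕ)) ((i : ℕ)) with hlt | heq | hgt
  · -- main case j < i
    have hne : i ≠ j := fun hc => by rw [hc] at hlt; exact lt_irrefl _ hlt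
    have hn1 : 1 ≤ (i : ℕ) - (j : ℕ) := by omega
    set n : ℕ := (i : ℕ) - (j : ℕ) with hndef
    set g : ℕ → Module.End ℝ (EuclideanSpace ℝ (Fin d)) := fun k =>
      if (j : ℕ) < k ∧ k ≤ (i : ℕ) ∧ k - (j : ℕ) ≤ nn r then
        ((Nat.choose (r - 1 + ((i : ℕ) - k)) (r - 1) : ℝ) * h (k - (j : ℕ)))
          • projChain W (i : ℕ) (j : ℕ)
      else 0 with hg
    have hterm : ∀ k : Fin N, T (r - 1) i k * Hmat k j = g (k : ℕ) := by
      intro k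
      rw [hTapp, hHmat]
      simp only [hg]
      by_cases h1 : (k : ℕ) ≤ (i : ℕ)
      · rw [if_pos h1]
        by_cases h2 : (j : ℕ) < (k : ℕ) ∧ (k : ℕ) - (j : ℕ) ≤ nn r
        · rw [if_pos h2, if_pos ⟨h2.1, h1, h2.2⟩]
          rw [smul_mul_assoc, mul_smul_comm, smul_smul,
            projChain_mul W (le_of_lt h2.1) h1]
        · rw [if_neg h2, mul_zero, if_neg (by tauto)]
      · rw [if_neg h1, zero_mul, if_neg (by tauto)]
    have hprod : (T (r - 1) * Hmat) i j
        = (∑ l ∈ Finset.Icc 1 (min n (nn r)),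
            (Nat.choose (r + n - l - 1) (r - 1) : ℝ) * h l) • projChain W (i : ℕ) (j : ℕ) := by
      rw [Matrix.mul_apply, Finset.sum_congr rfl fun k _ => hterm k]
      rw [Fin.sum_univ_eq_sum_range g N]
      have hsub : Finset.Icc ((j : ℕ) + 1) (min (i : ℕ) ((j : ℕ) + nn r)) ⊆ Finset.range N := by
        intro k hk
        rw [Finset.mem_Icc] at hk
        rw [Finset.mem_range]
        have := i.isLt
        omega
      have hzero : ∀ k ∈ Finset.range N,
          k ∉ Finset.Icc ((j : ℕ) + 1) (min (i : ℕ) ((j : ℕ) + nn r)) → g k = 0 := by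
        intro k _ hk
        rw [Finset.mem_Icc] at hk
        simp only [hg]
        exact if_neg (by omega)
      rw [← Finset.sum_subset hsub hzero]
      have hicc : Finset.Icc ((j : ℕ) + 1) (min (i : ℕ) ((j : ℕ) + nn r))
          = Finset.map (addRightEmbedding (j : ℕ)) (Finset.Icc 1 (min n (nn r))) := by
        rw [Finset.map_add_right_Icc]
        have e1 : (j : ℕ) + 1 = 1 + (j : ℕ) := by omega
        have e2 : (i : ℕ) ⊓ ((j : ℕ) + nn r) = n ⊓ nn r + (j : ℕ) := by omega
        rw [e1, e2]
      rw [hicc, Finset.sum_map]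
      have hconv : ∀ l ∈ Finset.Icc 1 (min n (nn r)),
          g ((addRightEmbedding (j : ℕ)) l)
            = ((Nat.choose (r + n - l - 1) (r - 1) : ℝ) * h l) • projChain W (i : ℕ) (j : ℕ) := by
        intro l hl
        rw [Finset.mem_Icc] at hl
        rw [addRightEmbedding_apply]
        simp only [hg]
        rw [if_pos (show (j:ℕ) < l + (j:ℕ) ∧ l + (j:ℕ) ≤ (i:ℕ) ∧ l + (j:ℕ) - (j:ℕ) ≤ nn r
          by omega)]
        have e1 : l + (j : ℕ) - (j : ℕ) = l := by omega
        have e2 : r - 1 + ((i : ℕ) - (l + (j : ℕ))) = r + n - l - 1 := by omega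
        rw [e1, e2]
      rw [Finset.sum_congr rfl hconv, ← Finset.sum_smul]
    rw [hprod, hTapp, if_pos (le_of_lt hlt), if_neg hne]
    by_cases hK : (i : ℕ) - (j : ℕ) < nn r - r + 1
    · rw [if_pos ⟨hlt, hK⟩]
      have hmin : min n (nn r) = n := by omega
      have e1 : r - 1 + n = r + (i : ℕ) - (j : ℕ) - 1 := by omega
      have e2 : ∀ l : ℕ, r + n - l - 1 = r + (i : ℕ) - (j : ℕ) - l - 1 := fun l => by omega
      have e3 : (∑ l ∈ Finset.Icc 1 n, (Nat.choose (r + n - l - 1) (r - 1) : ℝ) * h l)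
          = ∑ l ∈ Finset.Icc 1 n,
              (Nat.choose (r + (i : ℕ) - (j : ℕ) - l - 1) (r - 1) : ℝ) * h l :=
        Finset.sum_congr rfl fun l _ => by rw [e2 l]
      rw [hmin, e3, e1, ← sub_smul]
    · rw [if_neg (fun hc => hK hc.2)]
      have hext : (∑ l ∈ Finset.Icc 1 (min n (nn r)),
            (Nat.choose (r + n - l - 1) (r - 1) : ℝ) * h l)
          = ∑ l ∈ Finset.Icc 1 n, (Nat.choose (r + n - l - 1) (r - 1) : ℝ) * h l := by
        apply Finset.sum_subset (Finset.Icc_subset_Icc le_rfl (min_le_left _ _))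
        intro l hl hnl
        rw [Finset.mem_Icc] at hl
        rw [Finset.mem_Icc] at hnl
        rw [hhzero l (by omega), mul_zero]
      rw [hext]
      have hkey := key_identity r σ hr hσ nn hnn dd hdd h hh n (by omega)
      have e1 : r - 1 + n = r + n - 1 := by omega
      rw [e1, hkey, sub_self]
  · -- diagonal
    have hij : i = j := Fin.ext heq.symm
    subst hij
    rw [if_pos rfl]
    have hzero : (T (r - 1) * Hmat) i i = 0 := by
      rw [Matrix.mul_apply]
      apply Finset.sum_eq_zero
      intro k _
      rw [hTapp, hHmat]
      by_cases hk : (k : ℕ) ≤ (i : ℕ)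
      · rw [if_neg (by omega : ¬ ((i : ℕ) < (k : ℕ) ∧ (k : ℕ) - (i : ℕ) ≤ nn r)), mul_zero]
      · rw [if_neg hk, zero_mul]
    rw [hzero, sub_zero, hTapp, if_pos le_rfl, Nat.sub_self, Nat.add_zero, Nat.choose_self,
      projChain_of_le W le_rfl]
    simp
  · -- upper part, zero
    have hne : i ≠ j := fun hc => by rw [hc] at hgt; exact lt_irrefl _ hgt
    rw [if_neg hne, if_neg (by omega : ¬ ((j : ℕ) < (i : ℕ) ∧ (i : ℕ) - (j : ℕ) < nn r - r + 1))]
    have hzero : (T (r - 1) * Hmat) i j = 0 := by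
      rw [Matrix.mul_apply]
      apply Finset.sum_eq_zero
      intro k _
      rw [hTapp, hHmat]
      by_cases hk : (k : ℕ) ≤ (i : ℕ)
      · rw [if_neg (by omega : ¬ ((j : ℕ) < (k : ℕ) ∧ (k : ℕ) - (j : ℕ) ≤ nn r)), mul_zero]
      · rw [if_neg hk, zero_mul]
    rw [hzero, sub_zero, hTapp, if_neg (by omega)]
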